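/- Let U_P ⊆ U_R be pattern groups on {1,2,…,n} over F_q, and let I = {u ∈ U_R : u_{ij} ≠ 0 for i ≠ j implies i <_R j and not i <_P j}. If (l−1)(u−1) = 0 (matrix product) for all l ∈ I and u ∈ U_R, then: (a) I is an abelian subgroup of U_R, with lr = 1 + (l−1) + (r−1) and l^{−1} = 1 − (l−1) for l, r ∈ I; and (b) 1 + l(u−1)r = r^{−1} u r for all l, r ∈ I and u ∈ U_R. -/
import Mathlib


/-!
STATEMENT 9: Let U_P ⊆ U_R be pattern groups on {1,…,n} over F_q, and let
I = {u ∈ U_R : u_{ij} ≠ 0 for i ≠ j implies i <_R j and not i <_P j}.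
If (l−1)(u−1) = 0 for all l ∈ I and u ∈ U_R, then
(a) I is an abelian subgroup of U_R, with l·r = 1 + (l−1) + (r−1) and
    l⁻¹ = 1 − (l−1) for l, r ∈ I; and
(b) 1 + l(u−1)r = r⁻¹·u·r for all l, r ∈ I and u ∈ U_R.
-/
open scoped Classical

noncomputable section

def setFinset {α : Type*} [Fintype α] (S : Set α) : Finset α :=
  Finset.univ.filter (· ∈ S)

/-- A strict partial order on `{1,…,n}` that is a subrelation of the usual order. -/
def IsPatternOrder {n : ℕ} (P : Fin n → Fin n → Prop) : Prop :=
  (∀ i j, P i j → i < j) ∧ ∀ i j k, P i j → P j k → P i k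

/-- The pattern group `U_P` of unipotent upper-triangular matrices supported on `P`. -/
def patternGroup (F : Type*) [Field F] {n : ℕ} (P : Fin n → Fin n → Prop) :
    Set (Matrix (Fin n) (Fin n) F) :=
  {u | (∀ i, u i i = 1) ∧ ∀ i j, i ≠ j → u i j ≠ 0 → P i j}

/-- `χ` is constant on the superclasses of `G`: `u ~ v` iff `v − 1 ∈ G(u−1)G`. -/
def IsSuperclassFn {A : Type*} [Ring A] (G : Set A) (χ : A → ℂ) : Prop :=
  ∀ u ∈ G, ∀ v ∈ G, (∃ x ∈ G, ∃ y ∈ G, v - 1 = x * (u - 1) * y) → χ u = χ v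

/-- Superinduction `SInd_H^G(χ)(g) = (1/(|G||H|)) Σ_{x,y∈G} χ̇(x(g−1)y + 1)`. -/
def SInd {A : Type*} [Ring A] [Fintype A] (G H : Set A) (χ : A → ℂ) (g : A) : ℂ :=
  (((setFinset G).card : ℂ) * ((setFinset H).card : ℂ))⁻¹ *
    ∑ x ∈ setFinset G, ∑ y ∈ setFinset G,
      if x * (g - 1) * y + 1 ∈ H then χ (x * (g - 1) * y + 1) else 0

/-- Induction `Ind_H^G(χ)(g) = (1/|H|) Σ_{y∈G} χ̇(y⁻¹ g y)`. -/
def Ind {A : Type*} [Ring A] [Fintype A] (G H : Set A) (χ : A → ℂ) (g : A) : ℂ :=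
  ((setFinset H).card : ℂ)⁻¹ *
    ∑ y ∈ setFinset G,
      if Ring.inverse y * g * y ∈ H then χ (Ring.inverse y * g * y) else 0

/-- The set `I` of matrices supported on the relations of `R` that are not in `P`. -/
def ISet (F : Type*) [Field F] {n : ℕ} (R P : Fin n → Fin n → Prop) :
    Set (Matrix (Fin n) (Fin n) F) :=
  {u | (∀ i, u i i = 1) ∧ ∀ i j, i ≠ j → u i j ≠ 0 → R i j ∧ ¬ P i j}

theorem ISet_abelian_subgroup_and_conjugation_formula
    {n : ℕ} (F : Type*) [Field F] [Fintype F]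
    (P R : Fin n → Fin n → Prop)
    (hP : IsPatternOrder P) (hR : IsPatternOrder R)
    (hPR : ∀ i j, P i j → R i j)
    (hzero : ∀ l ∈ ISet F R P, ∀ u ∈ patternGroup F R, (l - 1) * (u - 1) = 0) :
    -- (a) `I` is an abelian subgroup of `U_R`:
    (ISet F R P ⊆ patternGroup F R) ∧
    ((1 : Matrix (Fin n) (Fin n) F) ∈ ISet F R P) ∧
    (∀ l ∈ ISet F R P, ∀ r ∈ ISet F R P,
      l * r ∈ ISet F R P ∧ l * r = 1 + (l - 1) + (r - 1) ∧ l * r = r * l) ∧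
    (∀ l ∈ ISet F R P, (1 - (l - 1) ∈ ISet F R P) ∧ l⁻¹ = 1 - (l - 1)) ∧
    -- (b) the conjugation formula:
    (∀ l ∈ ISet F R P, ∀ r ∈ ISet F R P, ∀ u ∈ patternGroup F R,
      1 + l * (u - 1) * r = r⁻¹ * u * r) := by
  have hsub : ISet F R P ⊆ patternGroup F R := fun u hu =>
    ⟨hu.1, fun i j hij hne => (hu.2 i j hij hne).1⟩
  have hz : ∀ l ∈ ISet F R P, ∀ u ∈ patternGroup F R,
      l * u = 1 + (l - 1) + (u - 1) := by
    intro l hl u hu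
    have h0 := hzero l hl u hu
    have h : l * u = 1 + (l - 1) + (u - 1) + (l - 1) * (u - 1) := by noncomm_ring
    rw [h, h0, add_zero]
  refine ⟨hsub, ?_, ?_, ?_, ?_⟩
  · exact ⟨fun i => Matrix.one_apply_eq i,
      fun i j hij hne => absurd (Matrix.one_apply_ne hij) hne⟩
  · intro l hl r hr
    have heq := hz l hl r (hsub hr)
    have hmem : l * r ∈ ISet F R P := by
      rw [heq]
      constructor
      · intro i
        simp [Matrix.add_apply, Matrix.sub_apply, Matrix.one_apply_eq, hl.1 i, hr.1 i]
      · intro i j hij hne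
        by_cases hL : l i j = 0
        · refine hr.2 i j hij fun h0 => hne ?_
          simp [Matrix.add_apply, Matrix.sub_apply, Matrix.one_apply_ne hij, hL, h0]
        · exact hl.2 i j hij hL
    refine ⟨hmem, heq, ?_⟩
    rw [heq, hz r hr l (hsub hl)]; abel
  · intro l hl
    have hmem : 1 - (l - 1) ∈ ISet F R P := by
      constructor
      · intro i
        simp [Matrix.sub_apply, Matrix.one_apply_eq, hl.1 i]
      · intro i j hij hne
        refine hl.2 i j hij fun h0 => hne ?_
        simp [Matrix.sub_apply, Matrix.one_apply_ne hij, h0]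
    refine ⟨hmem, ?_⟩
    apply Matrix.inv_eq_right_inv
    have h0 := hzero l hl l (hsub hl)
    have h : l * (1 - (l - 1)) = 1 - (l - 1) * (l - 1) := by noncomm_ring
    rw [h, h0, sub_zero]
  · intro l hl r hr u hu
    have h0l := hzero l hl u hu
    have h0r := hzero r hr u hu
    have h0rr := hzero r hr r (hsub hr)
    have hl1 : l * (u - 1) = (u - 1) := by
      have h : l * (u - 1) = (u - 1) + (l - 1) * (u - 1) := by noncomm_ring
      rw [h, h0l, add_zero]
    have hrinv : r⁻¹ = 1 - (r - 1) := by
      apply Matrix.inv_eq_right_inv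
      have h : r * (1 - (r - 1)) = 1 - (r - 1) * (r - 1) := by noncomm_ring
      rw [h, h0rr, sub_zero]
    rw [hl1, hrinv]
    have key : (1 - (r - 1)) * u * r
        = 1 + (u - 1) * r - (r - 1) * (u - 1) * r - (r - 1) * (r - 1) := by
      noncomm_ring
    rw [key, h0r, h0rr]
    simp
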